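/- Let k be a positive integer, G a k-tree with addition ordering v₁,…,vₙ, and let B be the branch B(V_i, v_i) where V_i = N_G(v_i) ∩ {v_j : j < i}. If u₀,…,u_s is the ordering of V(B)∖V_i induced from the addition ordering, then for every j∈[s], |V_i ∩ ⋂_{ℓ=1}^{j} N_B(u_ℓ)| ≥ |V_i ∩ ⋂_{ℓ=1}^{j−1} N_B(u_ℓ)| − 1. -/

import Mathlib

open SimpleGraph Finset
open scoped Classical

section Defs

variable {V : Type*}

/-- Degree of a vertex (classical, no decidability assumptions). -/
noncomputable def gdeg [Fintype V] (G : SimpleGraph V) (v : V) : ℕ :=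
  (Finset.univ.filter fun u => G.Adj v u).card

/-- Number of neighbors of `v` receiving color `c` under `φ`. -/
noncomputable def colorCount [Fintype V] (G : SimpleGraph V) {α : Type*} (φ : V → α)
    (v : V) (c : α) : ℕ :=
  (Finset.univ.filter fun u => G.Adj v u ∧ φ u = c).card

/-- `φ` is a proper coloring of `G`. -/
def ProperColoring (G : SimpleGraph V) {α : Type*} (φ : V → α) : Prop :=
  ∀ u w, G.Adj u w → φ u ≠ φ w

/-- Vertex `v` satisfies the odd condition w.r.t. `φ`. -/
def OddAt [Fintype V] (G : SimpleGraph V) {α : Type*} (φ : V → α) (v : V) : Prop :=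
  ∃ c, Odd (colorCount G φ v c)

/-- `φ` is an odd `m`-coloring of `G`. -/
def IsOddColoring [Fintype V] (G : SimpleGraph V) (m : ℕ) (φ : V → Fin m) : Prop :=
  ProperColoring G φ ∧ ∀ v : V, (∃ u, G.Adj v u) → OddAt G φ v

/-- `G` is odd `m`-colorable. -/
def OddColorable [Fintype V] (G : SimpleGraph V) (m : ℕ) : Prop :=
  ∃ φ : V → Fin m, IsOddColoring G m φ

/-- The identity ordering of `Fin n` is an addition ordering of `G` as a `k`-tree:
the first `k+1` vertices form a clique and every later vertex's earlier neighborhood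
is a clique of order `k`. -/
def IsAdditionOrdering {n : ℕ} (k : ℕ) (G : SimpleGraph (Fin n)) : Prop :=
  (∀ i j : Fin n, i.val < k + 1 → j.val < k + 1 → i ≠ j → G.Adj i j) ∧
  ∀ i : Fin n, k + 1 ≤ i.val →
    G.IsNClique k (Finset.univ.filter fun j => j < i ∧ G.Adj i j)

/-- `G` is a `k`-tree. -/
def IsKTree (k : ℕ) [Fintype V] (G : SimpleGraph V) : Prop :=
  k + 1 ≤ Fintype.card V ∧
  ∃ e : V ≃ Fin (Fintype.card V),
    IsAdditionOrdering k (SimpleGraph.comap (fun j => e.symm j) G)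

/-- The graph obtained from `G` by deleting the vertices in `S`
(the vertices of `S` are kept but become isolated). -/
def GraphDel (G : SimpleGraph V) (S : Set V) : SimpleGraph V where
  Adj x y := G.Adj x y ∧ x ∉ S ∧ y ∉ S
  symm := ⟨fun x y h => ⟨h.1.symm, h.2.2, h.2.1⟩⟩
  loopless := ⟨fun x h => G.irrefl h.1⟩

end Defs
section Defs
variable {V : Type*}

/-- `H` is a minor of `G`, via disjoint connected branch sets. -/
def IsMinorOf {W : Type*} (H : SimpleGraph W) (G : SimpleGraph V) : Prop :=
  ∃ f : W → Set V,
    (∀ w, (f w).Nonempty) ∧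
    (∀ w, (G.induce (f w)).Connected) ∧
    (Pairwise fun w w' => Disjoint (f w) (f w')) ∧
    (∀ ⦃w w'⦄, H.Adj w w' → ∃ a ∈ f w, ∃ b ∈ f w', G.Adj a b)

/-- `G` is `d`-degenerate: every nonempty (induced) subgraph has a vertex of degree at most `d`. -/
def DegenerateLE (G : SimpleGraph V) (d : ℕ) : Prop :=
  ∀ s : Finset V, s.Nonempty → ∃ v ∈ s, (s.filter fun u => G.Adj v u).card ≤ d

/-- `G` is outerplanar iff it has no `K₄` minor and no `K_{2,3}` minor. -/
def Outerplanar (G : SimpleGraph V) : Prop :=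
  ¬ IsMinorOf (completeGraph (Fin 4)) G ∧
  ¬ IsMinorOf (completeBipartiteGraph (Fin 2) (Fin 3)) G

/-- `G` has tree-width at most `k`, via tree decompositions. -/
def TreewidthAtMost [Fintype V] (G : SimpleGraph V) (k : ℕ) : Prop :=
  ∃ (n : ℕ) (T : SimpleGraph (Fin n)) (X : Fin n → Finset V),
    T.IsTree ∧
    (∀ v : V, ∃ i, v ∈ X i) ∧
    (∀ u v : V, G.Adj u v → ∃ i, u ∈ X i ∧ v ∈ X i) ∧
    (∀ v : V, (T.induce {i | v ∈ X i}).Connected) ∧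
    (∀ i, (X i).card ≤ k + 1)

/-- The root clique `V_i` of the branch at `v_i`: earlier neighbors of `v_i`. -/
noncomputable def rootClique {n : ℕ} (G : SimpleGraph (Fin n)) (i : Fin n) : Finset (Fin n) :=
  Finset.univ.filter fun j => j < i ∧ G.Adj i j

/-- Vertices of the branch `B(V_i, v_i)` outside the root clique: vertices reachable
from `v_i` by walks avoiding `V_i`. -/
def branchSet {n : ℕ} (G : SimpleGraph (Fin n)) (i : Fin n) : Set (Fin n) :=
  {x | x ∉ rootClique G i ∧ ∃ p : G.Walk i x, ∀ y ∈ p.support, y ∉ rootClique G i}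
end Defs

lemma mem_rootClique {n : ℕ} {G : SimpleGraph (Fin n)} {i a : Fin n} :
    a ∈ rootClique G i ↔ a < i ∧ G.Adj i a := by simp [rootClique]

lemma rootClique_isNClique {n k : ℕ} {G : SimpleGraph (Fin n)}
    (hG : IsAdditionOrdering k G) {m : Fin n} (hm : k + 1 ≤ m.val) :
    G.IsNClique k (rootClique G m) := hG.2 m hm

lemma surgery {n k : ℕ} {G : SimpleGraph (Fin n)} (hG : IsAdditionOrdering k G)
    {i : Fin n} (hi : k + 1 ≤ i.val) :
    ∀ (N : ℕ) (y : Fin n) (p : G.Walk i y), p.length ≤ N →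
      (∀ z ∈ p.support, z ∉ rootClique G i) →
      ∃ q : G.Walk i y, (∀ z ∈ q.support, z ∉ rootClique G i) ∧
        ∀ z ∈ q.support, z ≤ i ∨ z ≤ y := by
  intro N
  induction N with
  | zero =>
    intro y p hlen havoid
    have hnil : p.Nil := SimpleGraph.Walk.nil_iff_length_eq.mpr (Nat.le_zero.mp hlen)
    have hiy : i = y := hnil.eq
    subst hiy
    refine ⟨p, havoid, fun z hz => ?_⟩
    rw [SimpleGraph.Walk.nil_iff_support_eq] at hnil
    rw [hnil] at hz
    simp at hz
    exact Or.inl (le_of_eq hz)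
  | succ N ih =>
    intro y p hlen havoid
    have hsne : p.support.toFinset.Nonempty :=
      ⟨i, List.mem_toFinset.mpr p.start_mem_support⟩
    set m := p.support.toFinset.max' hsne with hmdef
    have hm : m ∈ p.support := List.mem_toFinset.mp (p.support.toFinset.max'_mem hsne)
    have hmax : ∀ z ∈ p.support, z ≤ m := fun z hz =>
      p.support.toFinset.le_max' z (List.mem_toFinset.mpr hz)
    by_cases hcase : m ≤ i ∨ m ≤ y
    · exact ⟨p, havoid, fun z hz =>
        hcase.imp (le_trans (hmax z hz)) (le_trans (hmax z hz))⟩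
    push_neg at hcase
    obtain ⟨him, hym⟩ := hcase
    -- split the walk at m
    have hmne_i : i ≠ m := ne_of_lt him
    have hmne_y : m ≠ y := (ne_of_lt hym).symm
    set q1 : G.Walk i m := p.takeUntil m hm with hq1def
    set q2 : G.Walk m y := p.dropUntil m hm with hq2def
    have hspec : q1.append q2 = p := p.take_spec hm
    have hq1sub : ∀ z ∈ q1.support, z ∈ p.support := fun z hz =>
      p.support_takeUntil_subset hm hz
    have hq2sub : ∀ z ∈ q2.support, z ∈ p.support := fun z hz =>
      p.support_dropUntil_subset hm hz
    have hnn1 : ¬ q1.reverse.Nil := SimpleGraph.Walk.not_nil_of_ne (Ne.symm hmne_i)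
    have hnn2 : ¬ q2.Nil := SimpleGraph.Walk.not_nil_of_ne hmne_y
    set a := q1.reverse.getVert 1 with hadef
    set b := q2.getVert 1 with hbdef
    have hadj_ma : G.Adj m a := q1.reverse.adj_snd hnn1
    have hadj_mb : G.Adj m b := q2.adj_snd hnn2
    set r1 : G.Walk i a := q1.reverse.tail.reverse with hr1def
    set r2 : G.Walk b y := q2.tail with hr2def
    have har1 : a ∈ q1.reverse.tail.support := q1.reverse.tail.start_mem_support
    have ha_mem_q1 : a ∈ q1.support := by
      have h1 : a ∈ q1.reverse.support := by
        rw [SimpleGraph.Walk.support_tail_of_not_nil _ hnn1] at har1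
        exact List.mem_of_mem_tail har1
      rwa [SimpleGraph.Walk.support_reverse, List.mem_reverse] at h1
    have hb_mem_q2 : b ∈ q2.support := by
      have h1 : b ∈ q2.tail.support := q2.tail.start_mem_support
      rw [SimpleGraph.Walk.support_tail_of_not_nil _ hnn2] at h1
      exact List.mem_of_mem_tail h1
    have ha_mem_p : a ∈ p.support := hq1sub a ha_mem_q1
    have hb_mem_p : b ∈ p.support := hq2sub b hb_mem_q2
    have ham : a < m := lt_of_le_of_ne (hmax a ha_mem_p) hadj_ma.ne'
    have hbm : b < m := lt_of_le_of_ne (hmax b hb_mem_p) hadj_mb.ne'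
    have hmval : k + 1 ≤ m.val := le_trans hi (le_of_lt him)
    have haRC : a ∈ rootClique G m := mem_rootClique.mpr ⟨ham, hadj_ma⟩
    have hbRC : b ∈ rootClique G m := mem_rootClique.mpr ⟨hbm, hadj_mb⟩
    -- subsets of supports for r1 r2
    have hr1sub : ∀ z ∈ r1.support, z ∈ p.support := by
      intro z hz
      rw [hr1def, SimpleGraph.Walk.support_reverse, List.mem_reverse,
        SimpleGraph.Walk.support_tail_of_not_nil _ hnn1] at hz
      have := List.mem_of_mem_tail hz
      rw [SimpleGraph.Walk.support_reverse, List.mem_reverse] at this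
      exact hq1sub z this
    have hr2sub : ∀ z ∈ r2.support, z ∈ p.support := by
      intro z hz
      rw [hr2def, SimpleGraph.Walk.support_tail_of_not_nil _ hnn2] at hz
      exact hq2sub z (List.mem_of_mem_tail hz)
    -- lengths
    have hlen1 : r1.length + 1 = q1.length := by
      rw [hr1def, SimpleGraph.Walk.length_reverse,
        SimpleGraph.Walk.length_tail_add_one hnn1, SimpleGraph.Walk.length_reverse]
    have hlen2 : r2.length + 1 = q2.length := SimpleGraph.Walk.length_tail_add_one hnn2
    have hlenp : q1.length + q2.length = p.length := by
      rw [← hspec, SimpleGraph.Walk.length_append]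
    by_cases hab : a = b
    · set q : G.Walk i y := r1.append (r2.copy hab.symm rfl) with hqdef
      have hqlen : q.length ≤ N := by
        have : q.length = r1.length + r2.length := by
          rw [hqdef, SimpleGraph.Walk.length_append, SimpleGraph.Walk.length_copy]
        omega
      have hqsub : ∀ z ∈ q.support, z ∈ p.support := by
        intro z hz
        rw [hqdef, SimpleGraph.Walk.mem_support_append_iff] at hz
        rcases hz with hz | hz
        · exact hr1sub z hz
        · rw [SimpleGraph.Walk.support_copy] at hz
          exact hr2sub z hz
      exact ih y q hqlen (fun z hz => havoid z (hqsub z hz))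
    · have hadj_ab : G.Adj a b :=
        (rootClique_isNClique hG hmval).1 haRC hbRC hab
      set q : G.Walk i y := r1.append (SimpleGraph.Walk.cons hadj_ab r2) with hqdef
      have hqlen : q.length ≤ N := by
        have : q.length = r1.length + (r2.length + 1) := by
          rw [hqdef, SimpleGraph.Walk.length_append, SimpleGraph.Walk.length_cons]
        omega
      have hqsub : ∀ z ∈ q.support, z ∈ p.support := by
        intro z hz
        rw [hqdef, SimpleGraph.Walk.mem_support_append_iff] at hz
        rcases hz with hz | hz
        · exact hr1sub z hz
        · rw [SimpleGraph.Walk.support_cons] at hz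
          rcases List.mem_cons.mp hz with rfl | hz
          · exact ha_mem_p
          · exact hr2sub z hz
      exact ih y q hqlen (fun z hz => havoid z (hqsub z hz))

lemma branch_ge {n k : ℕ} {G : SimpleGraph (Fin n)} (hG : IsAdditionOrdering k G)
    {i : Fin n} (hi : k + 1 ≤ i.val) {y : Fin n} (hy : y ∈ branchSet G i) : i ≤ y := by
  obtain ⟨hyrc, p, hp⟩ := hy
  obtain ⟨q, hq1, hq2⟩ := surgery hG hi p.length y p le_rfl hp
  by_contra hcon
  push_neg at hcon  -- y < i
  have hbound : ∀ z ∈ q.support, z ≤ i := fun z hz =>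
    (hq2 z hz).elim id (fun h => le_of_lt (lt_of_le_of_lt h hcon))
  have hne : i ≠ y := (ne_of_lt hcon).symm
  have hnn : ¬ q.Nil := SimpleGraph.Walk.not_nil_of_ne hne
  set a := q.getVert 1 with hadef
  have hadj : G.Adj i a := q.adj_snd hnn
  have hamem : a ∈ q.support := by
    have h1 : a ∈ q.tail.support := q.tail.start_mem_support
    rw [SimpleGraph.Walk.support_tail_of_not_nil _ hnn] at h1
    exact List.mem_of_mem_tail h1
  have hai : a < i := lt_of_le_of_ne (hbound a hamem) hadj.ne'
  exact hq1 a hamem (mem_rootClique.mpr ⟨hai, hadj⟩)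

lemma branch_adj_mem {n : ℕ} {G : SimpleGraph (Fin n)} {i y z : Fin n}
    (hy : y ∈ branchSet G i) (hadj : G.Adj y z) (hz : z ∉ rootClique G i) :
    z ∈ branchSet G i := by
  obtain ⟨hyrc, p, hp⟩ := hy
  refine ⟨hz, p.concat hadj, ?_⟩
  intro w hw
  rw [SimpleGraph.Walk.support_concat, List.mem_append] at hw
  rcases hw with hw | hw
  · exact hp w hw
  · simp at hw; subst hw; exact hz

lemma exists_lower_branch_nbr {n k : ℕ} {G : SimpleGraph (Fin n)}
    (hG : IsAdditionOrdering k G) {i : Fin n} (hi : k + 1 ≤ i.val) {u : Fin n}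
    (hu : u ∈ branchSet G i) (hiu : i < u) :
    ∃ y, G.Adj u y ∧ y < u ∧ y ∈ branchSet G i := by
  obtain ⟨hurc, p, hp⟩ := hu
  obtain ⟨q, hq1, hq2⟩ := surgery hG hi p.length u p le_rfl hp
  have hbound : ∀ z ∈ q.support, z ≤ u := fun z hz =>
    (hq2 z hz).elim (fun h => le_of_lt (lt_of_le_of_lt h hiu)) id
  have hne : u ≠ i := (ne_of_lt hiu).symm
  have hnn : ¬ q.reverse.Nil := SimpleGraph.Walk.not_nil_of_ne hne
  set a := q.reverse.getVert 1 with hadef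
  have hadj : G.Adj u a := q.reverse.adj_snd hnn
  have hamem : a ∈ q.support := by
    have h1 : a ∈ q.reverse.tail.support := q.reverse.tail.start_mem_support
    rw [SimpleGraph.Walk.support_tail_of_not_nil _ hnn] at h1
    have h2 := List.mem_of_mem_tail h1
    rwa [SimpleGraph.Walk.support_reverse, List.mem_reverse] at h2
  have hau : a < u := lt_of_le_of_ne (hbound a hamem) hadj.ne'
  refine ⟨a, hadj, hau, hq1 a hamem, q.takeUntil a hamem, ?_⟩
  intro w hw
  exact hq1 w (q.support_takeUntil_subset hamem hw)


/-- In a branch of a `k`-tree, the number of common neighbors in the root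
clique of an initial segment of branch vertices decreases by at most one at each step. -/
theorem branch_common_neighbors_decrease {n k : ℕ} (hk : 1 ≤ k)
    (G : SimpleGraph (Fin n)) (hG : IsAdditionOrdering k G)
    (i : Fin n) (hi : k + 1 ≤ i.val) (u : Fin n)
    (hu : u ∈ branchSet G i) (hiu : i < u) :
    ((rootClique G i).filter fun w =>
        ∀ x : Fin n, x ∈ branchSet G i → i < x → x ≤ u → G.Adj x w).card + 1 ≥
    ((rootClique G i).filter fun w =>
        ∀ x : Fin n, x ∈ branchSet G i → i < x → x < u → G.Adj x w).card := by
  set A := (rootClique G i).filter fun w =>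
        ∀ x : Fin n, x ∈ branchSet G i → i < x → x < u → G.Adj x w with hAdef
  set B := (rootClique G i).filter fun w =>
        ∀ x : Fin n, x ∈ branchSet G i → i < x → x ≤ u → G.Adj x w with hBdef
  have huval : k + 1 ≤ u.val := le_trans hi (le_of_lt hiu)
  have hRCu := rootClique_isNClique hG huval
  -- the set of branch vertices in rootClique G u
  set F := (rootClique G u).filter (fun z => z ∈ branchSet G i) with hFdef
  have hFne : F.Nonempty := by
    obtain ⟨y0, h1, h2, h3⟩ := exists_lower_branch_nbr hG hi hu hiu
    exact ⟨y0, Finset.mem_filter.mpr ⟨mem_rootClique.mpr ⟨h2, h1⟩, h3⟩⟩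
  set y := F.max' hFne with hydef
  have hyF : y ∈ F := F.max'_mem hFne
  obtain ⟨hyRCu, hybr⟩ := Finset.mem_filter.mp hyF
  have hyu : y < u := (mem_rootClique.mp hyRCu).1
  have hiy : i ≤ y := branch_ge hG hi hybr
  have hyval : k + 1 ≤ y.val := le_trans hi hiy
  have hRCy := rootClique_isNClique hG hyval
  -- rootClique G u ⊆ insert y (rootClique G y)
  have hsub : rootClique G u ⊆ insert y (rootClique G y) := by
    intro z hz
    by_cases hzy : z = y
    · rw [hzy]; exact Finset.mem_insert_self y _
    refine Finset.mem_insert_of_mem ?_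
    have hadjyz : G.Adj y z := hRCu.1 hyRCu hz (Ne.symm hzy)
    have hzltY : z < y := by
      by_cases hzi : z ∈ rootClique G i
      · exact lt_of_lt_of_le (mem_rootClique.mp hzi).1 hiy
      · have hzbr : z ∈ branchSet G i :=
          branch_adj_mem hu (mem_rootClique.mp hz).2 hzi
        have : z ≤ y := F.le_max' z (Finset.mem_filter.mpr ⟨hz, hzbr⟩)
        exact lt_of_le_of_ne this hzy
    exact mem_rootClique.mpr ⟨hzltY, hadjyz⟩
  -- A ⊆ rootClique G y
  have hAsub : A ⊆ rootClique G y := by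
    intro w hw
    rw [hAdef, Finset.mem_filter] at hw
    obtain ⟨hwRCi, hwall⟩ := hw
    rcases eq_or_lt_of_le hiy with heq | hlt
    · exact heq ▸ hwRCi
    · have hadj : G.Adj y w := hwall y hybr hlt hyu
      have hwy : w < y := lt_trans (mem_rootClique.mp hwRCi).1 hlt
      exact mem_rootClique.mpr ⟨hwy, hadj⟩
  -- counting
  have hynotRCy : y ∉ rootClique G y := by
    intro h; exact absurd (mem_rootClique.mp h).1 (lt_irrefl y)
  have hcard_ins : (insert y (rootClique G y)).card = k + 1 := by
    rw [Finset.card_insert_of_notMem hynotRCy, hRCy.2]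
  have hsd : (A \ rootClique G u) ⊆ (insert y (rootClique G y)) \ rootClique G u := by
    intro w hw
    rw [Finset.mem_sdiff] at hw ⊢
    exact ⟨Finset.mem_insert_of_mem (hAsub hw.1), hw.2⟩
  have hcard_sd : ((insert y (rootClique G y)) \ rootClique G u).card = 1 := by
    rw [Finset.card_sdiff_of_subset hsub, hcard_ins, hRCu.2]
    omega
  have hAsd : (A \ rootClique G u).card ≤ 1 :=
    hcard_sd ▸ Finset.card_le_card hsd
  have hsplit : (A.filter (fun w => w ∈ rootClique G u)).card
      + (A.filter (fun w => w ∉ rootClique G u)).card = A.card :=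
    Finset.card_filter_add_card_filter_not _
  have hfilter_eq : A.filter (fun w => w ∉ rootClique G u) = A \ rootClique G u := by
    rw [Finset.sdiff_eq_filter]
  have hBsup : A.filter (fun w => w ∈ rootClique G u) ⊆ B := by
    intro w hw
    rw [Finset.mem_filter] at hw
    obtain ⟨hwA, hwRCu⟩ := hw
    rw [hAdef, Finset.mem_filter] at hwA
    rw [hBdef, Finset.mem_filter]
    refine ⟨hwA.1, fun x hx hix hxu => ?_⟩
    rcases lt_or_eq_of_le hxu with hlt | heq
    · exact hwA.2 x hx hix hlt
    · exact heq ▸ (mem_rootClique.mp hwRCu).2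
  have h1 : (A.filter (fun w => w ∈ rootClique G u)).card ≤ B.card :=
    Finset.card_le_card hBsup
  have h2 : (A.filter (fun w => w ∉ rootClique G u)).card ≤ 1 := by
    rw [hfilter_eq]; exact hAsd
  omega
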